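/- In the model graph G, every edge joining a dual vertex x̃ to a triangle-vertex T (so that x ∈ T) is contained in exactly two triangles of G; the common neighbours of x̃ and T are exactly the two triangles of the Farey graph that contain x and share an edge with T. -/

import Mathlib

/-- Adjacency relation of the Farey graph on `Option ℚ`: `some x` and `some y` are
adjacent iff `|x.num * y.den - y.num * x.den| = 1`, and `none` (representing `∞`)
is adjacent to `some x` iff `x.den = 1`. -/
def fareyAdj : Option ℚ → Option ℚ → Prop
  | some x, some y => |x.num * (y.den : ℤ) - y.num * (x.den : ℤ)| = 1
  | some x, none => x.den = 1
  | none, some x => x.den = 1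
  | none, none => False

/-- The Farey graph `𝔽` on the vertex set `Option ℚ`. -/
def fareyGraph : SimpleGraph (Option ℚ) where
  Adj := fareyAdj
  symm := by
    constructor
    rintro (_ | x) (_ | y) h
    · exact h.elim
    · exact h
    · exact h
    · show |y.num * (x.den : ℤ) - x.num * (y.den : ℤ)| = 1
      rw [abs_sub_comm]
      exact h
  loopless := by
    constructor
    rintro (_ | x) h
    · exact h.elim
    · have : |x.num * (x.den : ℤ) - x.num * (x.den : ℤ)| = 1 := h
      simp at this

/-- A triangle of the Farey graph: a 3-element clique. -/
def FareyTriangle : Type := {s : Finset (Option ℚ) // fareyGraph.IsNClique 3 s}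

/-- The Farey dual graph `𝔽*`: vertices are the triangles of the Farey graph, two
triangles being adjacent iff they are distinct and share exactly two vertices. -/
def fareyDual : SimpleGraph FareyTriangle where
  Adj T T' := T ≠ T' ∧ (T.1 ∩ T'.1).card = 2
  symm := by
    constructor
    rintro T T' ⟨h1, h2⟩
    exact ⟨h1.symm, by rwa [Finset.inter_comm]⟩
  loopless := ⟨fun T h => h.1 rfl⟩

/-- Vertices of the model graph: Farey vertices `.inl x`, dual vertices
`.inr (.inl x)` (written `x̃`), and triangle-vertices `.inr (.inr T)`. -/
abbrev ModelVertex : Type := Option ℚ ⊕ (Option ℚ ⊕ FareyTriangle)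

/-- Adjacency relation of the model graph `G`. -/
def modelAdj : ModelVertex → ModelVertex → Prop
  | .inl x, .inl y => fareyGraph.Adj x y
  | .inl x, .inr (.inl y) => x = y
  | .inr (.inl x), .inl y => x = y
  | .inr (.inl x), .inr (.inr T) => x ∈ T.1
  | .inr (.inr T), .inr (.inl x) => x ∈ T.1
  | .inr (.inr T), .inr (.inr T') => T ≠ T' ∧ (T.1 ∩ T'.1).card = 2
  | _, _ => False

/-- The model graph `G` of the pants graph of `N₃`: on `V(𝔽) ⊔ V(𝔽) ⊔ T(𝔽)`, with
edges `x—y` for `x, y` adjacent in `𝔽`, `x̃—x`, `x̃—T` whenever `x ∈ T`, and `T—T'`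
whenever `T ≠ T'` and `|T ∩ T'| = 2`. -/
def modelGraph : SimpleGraph ModelVertex where
  Adj := modelAdj
  symm := by
    constructor
    rintro (x | x | T) (y | y | T') h
    · exact fareyGraph.adj_symm h
    · exact h.symm
    · exact h.elim
    · exact h.symm
    · exact h.elim
    · exact h
    · exact h.elim
    · exact h
    · exact ⟨h.1.symm, by
        have := h.2
        rwa [Finset.inter_comm]⟩
  loopless := by
    constructor
    rintro (x | x | T) h
    · exact SimpleGraph.irrefl fareyGraph h
    · exact h.elim
    · exact h.1 rfl

namespace FareyAux

/-- Projective-style coordinates. -/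
def rep : Option ℚ → ℤ × ℕ
  | none => (1, 0)
  | some x => (x.num, x.den)

lemma rep_inj : Function.Injective rep := by
  rintro (_|x) (_|y) h <;> simp [rep, Prod.ext_iff] at h ⊢
  · exact y.den_nz h.2.symm
  · exact Rat.ext h.1 h.2

lemma rep_norm (w : Option ℚ) : (rep w).2 = 0 → (rep w).1 = 1 := by
  rintro h
  cases w with
  | none => rfl
  | some x => exact absurd h x.den_nz

lemma adjI (a b : Option ℚ) :
    fareyGraph.Adj a b ↔ |(rep a).1 * ((rep b).2 : ℤ) - (rep b).1 * ((rep a).2 : ℤ)| = 1 := by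
  show fareyAdj a b ↔ _
  rcases a with _|x <;> rcases b with _|y <;> simp [fareyAdj, rep]

lemma int_solve {p q r s m n e d1 d2 : ℤ}
    (e1 : p*s - r*q = e) (e2 : m*q - p*n = d1) (e3 : m*s - r*n = d2)
    (he : e = 1 ∨ e = -1) (h1 : d1 = 1 ∨ d1 = -1) (h2 : d2 = 1 ∨ d2 = -1) :
    (m = p + r ∧ n = q + s) ∨ (m = -(p+r) ∧ n = -(q+s)) ∨
    (m = p - r ∧ n = q - s) ∨ (m = r - p ∧ n = s - q) := by
  have hm : m * e = p*d2 - r*d1 := by linear_combination (-r)*e2 + p*e3 - m*e1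
  have hn : n * e = q*d2 - s*d1 := by linear_combination (-s)*e2 + q*e3 - n*e1
  rcases he with h|h <;> rcases h1 with h1|h1 <;> rcases h2 with h2|h2 <;>
    subst h h1 h2 <;> simp at hm hn <;> omega

lemma int_solve' {p q r s m n : ℤ} (h : |p*s - r*q| = 1)
    (h1 : |p*n - m*q| = 1) (h2 : |r*n - m*s| = 1) :
    (m = p + r ∧ n = q + s) ∨ (m = -(p+r) ∧ n = -(q+s)) ∨
    (m = p - r ∧ n = q - s) ∨ (m = r - p ∧ n = s - q) := by
  rw [abs_sub_comm] at h1 h2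
  exact int_solve rfl rfl rfl ((abs_eq (by norm_num)).1 h)
    ((abs_eq (by norm_num)).1 h1) ((abs_eq (by norm_num)).1 h2)

lemma cop_of {m : ℤ} {n : ℕ} {p q : ℤ} (h : |m*q - p*(n:ℤ)| = 1) : m.natAbs.Coprime n := by
  have hd : (Int.gcd m (n:ℤ) : ℤ) ∣ m*q - p*(n:ℤ) :=
    dvd_sub ((Int.gcd_dvd_left m (n:ℤ)).mul_right q) ((Int.gcd_dvd_right m (n:ℤ)).mul_left p)
  have h1 : (Int.gcd m (n:ℤ) : ℤ) ∣ 1 := by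
    rcases abs_eq (by norm_num : (0:ℤ) ≤ 1) |>.1 h with h'|h'
    · rw [h'] at hd; exact hd
    · rw [h'] at hd; exact (dvd_neg.mp hd)
  have h2 : Int.gcd m (n:ℤ) ∣ 1 := by exact_mod_cast h1
  have : Int.gcd m (n:ℤ) = 1 := Nat.dvd_one.mp h2
  simpa [Int.gcd] using this

/-- Vertex with prescribed coordinates. -/
def mkV (m : ℤ) (n : ℕ) (cop : m.natAbs.Coprime n) : Option ℚ :=
  if h : n = 0 then none else some ⟨m, n, h, cop⟩

lemma rep_mkV (m : ℤ) (n : ℕ) (cop : m.natAbs.Coprime n) (h : n ≠ 0) :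
    rep (mkV m n cop) = (m, n) := by
  simp [mkV, h, rep]

lemma farey_common_aux {a b : Option ℚ} (h : fareyGraph.Adj a b)
    (hle : (rep b).2 ≤ (rep a).2) :
    ∃ c d : Option ℚ, c ≠ d ∧
      ∀ w, (fareyGraph.Adj a w ∧ fareyGraph.Adj b w) ↔ (w = c ∨ w = d) := by
  rcases ha : rep a with ⟨p, q⟩
  rcases hb : rep b with ⟨r, s⟩
  rw [ha, hb] at hle
  dsimp only at hle
  have hab : |p * (s:ℤ) - r * (q:ℤ)| = 1 := by
    have t := (adjI a b).mp h; rw [ha, hb] at t; exact t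
  have hnb : s = 0 → r = 1 := by
    intro h0; have t := rep_norm b; rw [hb] at t; exact t h0
  have hqs : ¬(q = 0 ∧ s = 0) := by
    rintro ⟨h1, h2⟩; rw [h1, h2] at hab; simp at hab
  have copc : (p + r).natAbs.Coprime (q + s) := by
    apply cop_of (p := p) (q := (q:ℤ))
    have e : (p + r) * (q:ℤ) - p * ((q + s : ℕ):ℤ) = -(p * (s:ℤ) - r * (q:ℤ)) := by
      push_cast; ring
    rw [e, abs_neg]; exact hab
  set c : Option ℚ := mkV (p + r) (q + s) copc with hc
  have repc : rep c = (p + r, q + s) := rep_mkV _ _ _ (by omega)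
  have hac : fareyGraph.Adj a c := by
    rw [adjI, ha, repc]
    show |p * ((q + s : ℕ):ℤ) - (p + r) * (q:ℤ)| = 1
    have e : p * ((q + s : ℕ):ℤ) - (p + r) * (q:ℤ) = p * (s:ℤ) - r * (q:ℤ) := by
      push_cast; ring
    rw [e]; exact hab
  have hbc : fareyGraph.Adj b c := by
    rw [adjI, hb, repc]
    show |r * ((q + s : ℕ):ℤ) - (p + r) * (s:ℤ)| = 1
    have e : r * ((q + s : ℕ):ℤ) - (p + r) * (s:ℤ) = -(p * (s:ℤ) - r * (q:ℤ)) := by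
      push_cast; ring
    rw [e, abs_neg]; exact hab
  rcases eq_or_lt_of_le hle with heq | hlt
  · -- s = q, both are integers; the second common neighbour is ∞
    have hq1 : q = 1 := by
      have hd : (q:ℤ) ∣ p * (s:ℤ) - r * (q:ℤ) := ⟨p - r, by rw [← heq]; ring⟩
      have h1 : (q:ℤ) ∣ 1 := by
        rcases abs_eq (by norm_num : (0:ℤ) ≤ 1) |>.1 hab with h'|h'
        · rw [h'] at hd; exact hd
        · rw [h'] at hd; exact dvd_neg.mp hd
      have h2 : q ∣ 1 := by exact_mod_cast h1
      exact Nat.dvd_one.mp h2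
    have hs1 : s = 1 := heq.trans hq1
    have han : fareyGraph.Adj a none := by
      rw [adjI, ha]; simp [rep, hq1]
    have hbn : fareyGraph.Adj b none := by
      rw [adjI, hb]; simp [rep, hs1]
    refine ⟨c, none, ?_, ?_⟩
    · intro hcn
      rw [hcn] at repc
      simp [rep, Prod.ext_iff] at repc
      omega
    · intro w
      constructor
      · rintro ⟨w1, w2⟩
        have A1 : |p * ((rep w).2:ℤ) - (rep w).1 * (q:ℤ)| = 1 := by
          have t := (adjI a w).mp w1; rw [ha] at t; exact t
        have A2 : |r * ((rep w).2:ℤ) - (rep w).1 * (s:ℤ)| = 1 := by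
          have t := (adjI b w).mp w2; rw [hb] at t; exact t
        have hwn : (rep w).2 = 0 → (rep w).1 = 1 := rep_norm w
        rcases hw : rep w with ⟨m, n⟩
        rw [hw] at A1 A2 hwn
        dsimp only at A1 A2 hwn
        rcases int_solve' hab A1 A2 with ⟨h1, h2⟩ | ⟨h1, h2⟩ | ⟨h1, h2⟩ | ⟨h1, h2⟩
        · left
          apply rep_inj
          have hn : n = q + s := by exact_mod_cast h2
          rw [hw, repc, h1, hn]
        · exfalso; omega
        · right
          apply rep_inj
          have hn : n = 0 := by omega
          have hm : m = 1 := hwn hn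
          rw [hw, hn, hm]; rfl
        · right
          apply rep_inj
          have hn : n = 0 := by omega
          have hm : m = 1 := hwn hn
          rw [hw, hn, hm]; rfl
      · rintro (rfl | rfl)
        · exact ⟨hac, hbc⟩
        · exact ⟨han, hbn⟩
  · -- s < q : the second common neighbour has coordinates (p - r, q - s)
    have hcast : ((q - s : ℕ):ℤ) = (q:ℤ) - (s:ℤ) := by omega
    have copd : (p - r).natAbs.Coprime (q - s) := by
      apply cop_of (p := p) (q := (q:ℤ))
      have e : (p - r) * (q:ℤ) - p * ((q - s : ℕ):ℤ) = p * (s:ℤ) - r * (q:ℤ) := by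
        rw [hcast]; ring
      rw [e]; exact hab
    set d : Option ℚ := mkV (p - r) (q - s) copd with hd
    have repd : rep d = (p - r, q - s) := rep_mkV _ _ _ (by omega)
    have had : fareyGraph.Adj a d := by
      rw [adjI, ha, repd]
      show |p * ((q - s : ℕ):ℤ) - (p - r) * (q:ℤ)| = 1
      have e : p * ((q - s : ℕ):ℤ) - (p - r) * (q:ℤ) = -(p * (s:ℤ) - r * (q:ℤ)) := by
        rw [hcast]; ring
      rw [e, abs_neg]; exact hab
    have hbd : fareyGraph.Adj b d := by
      rw [adjI, hb, repd]
      show |r * ((q - s : ℕ):ℤ) - (p - r) * (s:ℤ)| = 1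
      have e : r * ((q - s : ℕ):ℤ) - (p - r) * (s:ℤ) = -(p * (s:ℤ) - r * (q:ℤ)) := by
        rw [hcast]; ring
      rw [e, abs_neg]; exact hab
    refine ⟨c, d, ?_, ?_⟩
    · intro hcd
      rw [hcd] at repc
      have e2 := repd.symm.trans repc
      rw [Prod.ext_iff] at e2
      dsimp only at e2
      have hs0 : s = 0 := by omega
      have hr1 : r = 1 := hnb hs0
      omega
    · intro w
      constructor
      · rintro ⟨w1, w2⟩
        have A1 : |p * ((rep w).2:ℤ) - (rep w).1 * (q:ℤ)| = 1 := by
          have t := (adjI a w).mp w1; rw [ha] at t; exact t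
        have A2 : |r * ((rep w).2:ℤ) - (rep w).1 * (s:ℤ)| = 1 := by
          have t := (adjI b w).mp w2; rw [hb] at t; exact t
        rcases hw : rep w with ⟨m, n⟩
        rw [hw] at A1 A2
        dsimp only at A1 A2
        rcases int_solve' hab A1 A2 with ⟨h1, h2⟩ | ⟨h1, h2⟩ | ⟨h1, h2⟩ | ⟨h1, h2⟩
        · left
          apply rep_inj
          have hn : n = q + s := by exact_mod_cast h2
          rw [hw, repc, h1, hn]
        · exfalso; omega
        · right
          apply rep_inj
          have hn : n = q - s := by omega
          rw [hw, repd, h1, hn]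
        · exfalso; omega
      · rintro (rfl | rfl)
        · exact ⟨hac, hbc⟩
        · exact ⟨had, hbd⟩

lemma farey_common {a b : Option ℚ} (h : fareyGraph.Adj a b) :
    ∃ c d : Option ℚ, c ≠ d ∧
      ∀ w, (fareyGraph.Adj a w ∧ fareyGraph.Adj b w) ↔ (w = c ∨ w = d) := by
  rcases le_total (rep b).2 (rep a).2 with hle | hle
  · exact farey_common_aux h hle
  · obtain ⟨c, d, hcd, hw⟩ := farey_common_aux h.symm hle
    exact ⟨c, d, hcd, fun w => by rw [← hw w]; exact and_comm⟩


lemma erase_two {T : Finset (Option ℚ)} (hT : fareyGraph.IsNClique 3 T) {x : Option ℚ}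
    (hx : x ∈ T) : ∃ y z, y ≠ z ∧ y ≠ x ∧ z ≠ x ∧ T = {x, y, z} := by
  have hc : (T.erase x).card = 2 := by
    rw [Finset.card_erase_of_mem hx, hT.card_eq]
  obtain ⟨y, z, hyz, hE⟩ := Finset.card_eq_two.mp hc
  have hy : y ∈ T.erase x := by rw [hE]; simp
  have hz : z ∈ T.erase x := by rw [hE]; simp
  refine ⟨y, z, hyz, (Finset.mem_erase.mp hy).1, (Finset.mem_erase.mp hz).1, ?_⟩
  rw [← Finset.insert_erase hx, hE]

lemma clique_adj {T : FareyTriangle} {u v : Option ℚ} (hu : u ∈ T.1) (hv : v ∈ T.1)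
    (huv : u ≠ v) : fareyGraph.Adj u v :=
  T.2.1 (Finset.mem_coe.mpr hu) (Finset.mem_coe.mpr hv) huv

lemma other_neighbour {x y z : Option ℚ} (hxy : fareyGraph.Adj x y)
    (hxz : fareyGraph.Adj x z) (hyz : fareyGraph.Adj y z) :
    ∃ w, w ≠ z ∧ ∀ v, (fareyGraph.Adj x v ∧ fareyGraph.Adj y v) ↔ (v = z ∨ v = w) := by
  obtain ⟨c, d, hcd, hw⟩ := farey_common hxy
  rcases (hw z).mp ⟨hxz, hyz⟩ with h | h
  · subst h
    exact ⟨d, hcd.symm, hw⟩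
  · subst h
    exact ⟨c, hcd, fun v => (hw v).trans or_comm⟩

lemma key_case {x u v y z w1 w2 : Option ℚ} {S T : FareyTriangle}
    (hSe : S.1 = {x, u, v}) (hTe : T.1 = {x, y, z})
    (hxv : fareyGraph.Adj x v) (huv : fareyGraph.Adj u v)
    (Hc1 : ∀ t, (fareyGraph.Adj x t ∧ fareyGraph.Adj y t) ↔ (t = z ∨ t = w1))
    (Hc2 : ∀ t, (fareyGraph.Adj x t ∧ fareyGraph.Adj z t) ↔ (t = y ∨ t = w2))
    (huT : u ∈ T.1) (hvT : v ∉ T.1) (hux : u ≠ x) :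
    S.1 = {x, y, w1} ∨ S.1 = {x, z, w2} := by
  have hu : u = y ∨ u = z := by
    rw [hTe] at huT; simp at huT
    rcases huT with h|h|h
    · exact absurd h hux
    · exact Or.inl h
    · exact Or.inr h
  have hvz : v ≠ z := by intro e; apply hvT; rw [hTe, e]; simp
  have hvy : v ≠ y := by intro e; apply hvT; rw [hTe, e]; simp
  rcases hu with rfl | rfl
  · left
    rcases (Hc1 v).mp ⟨hxv, huv⟩ with h | h
    · exact absurd h hvz
    · rw [hSe, h]
  · right
    rcases (Hc2 v).mp ⟨hxv, huv⟩ with h | h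
    · exact absurd h hvy
    · rw [hSe, h]

lemma two_triangles (x : Option ℚ) (T : FareyTriangle) (hx : x ∈ T.1) :
    ∃ S1 S2 : FareyTriangle, S1 ≠ S2 ∧
      {S : FareyTriangle | x ∈ S.1 ∧ S ≠ T ∧ (S.1 ∩ T.1).card = 2} = {S1, S2} := by
  obtain ⟨y, z, hyz, hyx, hzx, hTe⟩ := erase_two T.2 hx
  have hy : y ∈ T.1 := by rw [hTe]; simp
  have hz : z ∈ T.1 := by rw [hTe]; simp
  have hxy : fareyGraph.Adj x y := clique_adj hx hy (Ne.symm hyx)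
  have hxz : fareyGraph.Adj x z := clique_adj hx hz (Ne.symm hzx)
  have hyzadj : fareyGraph.Adj y z := clique_adj hy hz hyz
  obtain ⟨w1, hw1z, Hc1⟩ := other_neighbour hxy hxz hyzadj
  obtain ⟨w2, hw2y, Hc2⟩ := other_neighbour hxz hxy hyzadj.symm
  have hw1adj := (Hc1 w1).mpr (Or.inr rfl)
  have hw2adj := (Hc2 w2).mpr (Or.inr rfl)
  have hw1x : w1 ≠ x := hw1adj.1.ne'
  have hw1y : w1 ≠ y := hw1adj.2.ne'
  have hw2x : w2 ≠ x := hw2adj.1.ne'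
  have hw2z : w2 ≠ z := hw2adj.2.ne'
  have hw1T : w1 ∉ T.1 := by rw [hTe]; simp [hw1x, hw1y, hw1z]
  have hw2T : w2 ∉ T.1 := by rw [hTe]; simp [hw2x, hw2y, hw2z]
  have hcl1 : fareyGraph.IsNClique 3 {x, y, w1} :=
    SimpleGraph.is3Clique_triple_iff.mpr ⟨hxy, hw1adj.1, hw1adj.2⟩
  have hcl2 : fareyGraph.IsNClique 3 {x, z, w2} :=
    SimpleGraph.is3Clique_triple_iff.mpr ⟨hxz, hw2adj.1, hw2adj.2⟩
  refine ⟨⟨{x, y, w1}, hcl1⟩, ⟨{x, z, w2}, hcl2⟩, ?_, ?_⟩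
  · intro e
    have e : ({x, y, w1} : Finset (Option ℚ)) = {x, z, w2} := congrArg Subtype.val e
    have hmem : y ∈ ({x, z, w2} : Finset (Option ℚ)) := by rw [← e]; simp
    simp at hmem
    rcases hmem with h | h | h
    · exact hyx h
    · exact hyz h
    · exact hw2y h.symm
  · ext S
    simp only [Set.mem_setOf_eq, Set.mem_insert_iff, Set.mem_singleton_iff]
    constructor
    · rintro ⟨hxS, hST, hcard⟩
      obtain ⟨u, v, huv, hux, hvx, hSe⟩ := erase_two S.2 hxS
      have huS : u ∈ S.1 := by rw [hSe]; simp
      have hvS : v ∈ S.1 := by rw [hSe]; simp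
      have hxu : fareyGraph.Adj x u := clique_adj hxS huS (Ne.symm hux)
      have hxv : fareyGraph.Adj x v := clique_adj hxS hvS (Ne.symm hvx)
      have huvadj : fareyGraph.Adj u v := clique_adj huS hvS huv
      have hnotboth : ¬(u ∈ T.1 ∧ v ∈ T.1) := by
        rintro ⟨h1, h2⟩
        apply hST
        apply Subtype.ext
        apply Finset.eq_of_subset_of_card_le
        · rw [hSe]
          intro t ht
          simp at ht
          rcases ht with rfl | rfl | rfl
          exacts [hx, h1, h2]
        · exact le_of_eq (by rw [T.2.card_eq, S.2.card_eq])
      have honeof : u ∈ T.1 ∨ v ∈ T.1 := by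
        by_contra hcon
        push_neg at hcon
        have hith : S.1 ∩ T.1 = {x} := by
          ext t
          rw [hSe]
          simp only [Finset.mem_inter, Finset.mem_insert, Finset.mem_singleton]
          constructor
          · rintro ⟨rfl | rfl | rfl, ht⟩
            · rfl
            · exact absurd ht hcon.1
            · exact absurd ht hcon.2
          · rintro rfl
            exact ⟨Or.inl rfl, hx⟩
        rw [hith] at hcard
        simp at hcard
      have hres : S.1 = {x, y, w1} ∨ S.1 = {x, z, w2} := by
        rcases honeof with hu | hv
        · exact key_case hSe hTe hxv huvadj Hc1 Hc2 hu
            (fun hvT => hnotboth ⟨hu, hvT⟩) hux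
        · have hSe' : S.1 = {x, v, u} := by
            rw [hSe]; exact congrArg (insert x) (Finset.pair_comm u v)
          exact key_case hSe' hTe hxu huvadj.symm Hc1 Hc2 hv
            (fun huT => hnotboth ⟨huT, hv⟩) hvx
      rcases hres with h | h
      · exact Or.inl (Subtype.ext h)
      · exact Or.inr (Subtype.ext h)
    · rintro (rfl | rfl)
      · refine ⟨by show x ∈ ({x, y, w1} : Finset (Option ℚ)); simp, ?_, ?_⟩
        · intro e
          have e' : ({x, y, w1} : Finset (Option ℚ)) = T.1 := Subtype.ext_iff.mp e
          have : w1 ∈ T.1 := by rw [← e']; simp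
          exact hw1T this
        · have hith : ({x, y, w1} : Finset (Option ℚ)) ∩ T.1 = {x, y} := by
            rw [hTe]
            ext t
            simp only [Finset.mem_inter, Finset.mem_insert, Finset.mem_singleton]
            constructor
            · rintro ⟨h1 | h1 | h1, h2⟩ <;> subst h1 <;> tauto
            · rintro (rfl | rfl) <;> tauto
          show (({x, y, w1} : Finset (Option ℚ)) ∩ T.1).card = 2
          rw [hith]
          exact Finset.card_pair hxy.ne
      · refine ⟨by show x ∈ ({x, z, w2} : Finset (Option ℚ)); simp, ?_, ?_⟩
        · intro e
          have e' : ({x, z, w2} : Finset (Option ℚ)) = T.1 := Subtype.ext_iff.mp e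
          have : w2 ∈ T.1 := by rw [← e']; simp
          exact hw2T this
        · have hith : ({x, z, w2} : Finset (Option ℚ)) ∩ T.1 = {x, z} := by
            rw [hTe]
            ext t
            simp only [Finset.mem_inter, Finset.mem_insert, Finset.mem_singleton]
            constructor
            · rintro ⟨h1 | h1 | h1, h2⟩ <;> subst h1 <;> tauto
            · rintro (rfl | rfl) <;> tauto
          show (({x, z, w2} : Finset (Option ℚ)) ∩ T.1).card = 2
          rw [hith]
          exact Finset.card_pair hxz.ne

end FareyAux

/-- In the model graph `G`, every edge joining a dual vertex `x̃` to a
triangle-vertex `T` (with `x ∈ T`) is contained in exactly two triangles of `G`: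
the common neighbours of `x̃` and `T` are exactly the triangles of the Farey graph
containing `x` and sharing an edge with `T`. -/
theorem modelGraph_dual_triangle_edge_common_neighbours
    (x : Option ℚ) (T : FareyTriangle) (hx : x ∈ T.1) :
    {w : ModelVertex | modelGraph.Adj (.inr (.inl x)) w ∧
        modelGraph.Adj (.inr (.inr T)) w} =
      {w : ModelVertex | ∃ S : FareyTriangle, w = .inr (.inr S) ∧
        x ∈ S.1 ∧ S ≠ T ∧ (S.1 ∩ T.1).card = 2} ∧
    {w : ModelVertex | modelGraph.Adj (.inr (.inl x)) w ∧
        modelGraph.Adj (.inr (.inr T)) w}.ncard = 2 := by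
  obtain ⟨S1, S2, hS12, hset⟩ := FareyAux.two_triangles x T hx
  have h1 : {w : ModelVertex | modelGraph.Adj (.inr (.inl x)) w ∧
        modelGraph.Adj (.inr (.inr T)) w} =
      {w : ModelVertex | ∃ S : FareyTriangle, w = .inr (.inr S) ∧
        x ∈ S.1 ∧ S ≠ T ∧ (S.1 ∩ T.1).card = 2} := by
    ext w
    simp only [Set.mem_setOf_eq]
    constructor
    · rintro ⟨ha, hb⟩
      rcases w with y | y | S
      · exact hb.elim
      · exact ha.elim
      · have ha' : x ∈ S.1 := ha
        have hb' : T ≠ S ∧ (T.1 ∩ S.1).card = 2 := hb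
        exact ⟨S, rfl, ha', hb'.1.symm, by rw [Finset.inter_comm]; exact hb'.2⟩
    · rintro ⟨S, rfl, h1, h2, h3⟩
      refine ⟨?_, ?_⟩
      · show x ∈ S.1
        exact h1
      · show T ≠ S ∧ (T.1 ∩ S.1).card = 2
        exact ⟨h2.symm, by rw [Finset.inter_comm]; exact h3⟩
  have h2 : {w : ModelVertex | ∃ S : FareyTriangle, w = .inr (.inr S) ∧
        x ∈ S.1 ∧ S ≠ T ∧ (S.1 ∩ T.1).card = 2} =
      {(.inr (.inr S1) : ModelVertex), .inr (.inr S2)} := by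
    ext w
    simp only [Set.mem_setOf_eq, Set.mem_insert_iff, Set.mem_singleton_iff]
    constructor
    · rintro ⟨S, rfl, hS⟩
      have hmem : S ∈ ({S1, S2} : Set FareyTriangle) := by rw [← hset]; exact hS
      simp only [Set.mem_insert_iff, Set.mem_singleton_iff] at hmem
      rcases hmem with rfl | rfl
      · exact Or.inl rfl
      · exact Or.inr rfl
    · rintro (rfl | rfl)
      · have : S1 ∈ {S : FareyTriangle | x ∈ S.1 ∧ S ≠ T ∧ (S.1 ∩ T.1).card = 2} := by
          rw [hset]; left; rfl
        exact ⟨S1, rfl, this⟩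
      · have : S2 ∈ {S : FareyTriangle | x ∈ S.1 ∧ S ≠ T ∧ (S.1 ∩ T.1).card = 2} := by
          rw [hset]; right; rfl
        exact ⟨S2, rfl, this⟩
  refine ⟨h1, ?_⟩
  rw [h1, h2]
  exact Set.ncard_pair (by simp [hS12])
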